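/- For every i ≥ 1, every word x with at least i occurrences of `true`, and every word y: ⟨a_{p,i}* x | y⟩ = ⟨x | a_{p,i+1} y⟩, where the right side is 0 if y has fewer than i+1 occurrences of `true`. That is, the *-adjoint of doubling the i-th pawn is deleting the (i+1)-th pawn. -/

import Mathlib

/-- A single pawn move: a pawn (`true`) advances one square rightward into an
empty square (`false`). -/
def PawnMove (w₀ w₁ : List Bool) : Prop :=
  ∃ u v : List Bool, w₀ = u ++ [true, false] ++ v ∧ w₁ = u ++ [false, true] ++ v

/-- Reachability: the reflexive-transitive closure of the single-move relation. -/
def Reach : List Bool → List Bool → Prop :=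
  Relation.ReflTransGen PawnMove

/-- The `ZMod 2` pairing `⟨w₀|w₁⟩`: `1` if `w₁` is reachable from `w₀`, else `0`. -/
noncomputable def pairing (w₀ w₁ : List Bool) : ZMod 2 :=
  open Classical in if Reach w₀ w₁ then 1 else 0

/-- Pairing extended to `Option`: any pairing in which one argument is `0`
(i.e. `none`) equals `0`. -/
noncomputable def pairingO : Option (List Bool) → Option (List Bool) → ZMod 2
  | some x, some y => pairing x y
  | none, _ => 0
  | _, none => 0

/-- `delOcc b i w` deletes the `i`-th occurrence (counted from the left,
starting at `1`) of `b` in `w`; it is `none` (i.e. `0`) if `w` has fewer than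
`i` occurrences of `b`. -/
def delOcc (b : Bool) : ℕ → List Bool → Option (List Bool)
  | _, [] => none
  | i, a :: w =>
    if a = b then
      if i = 1 then some w
      else Option.map (List.cons a) (delOcc b (i - 1) w)
    else Option.map (List.cons a) (delOcc b i w)

/-- `dblOcc b i w` doubles the `i`-th occurrence (counted from the left,
starting at `1`) of `b` in `w`, i.e. inserts an additional `b` immediately
before it; it is `none` (i.e. `0`) if `w` has fewer than `i` occurrences of
`b`. -/
def dblOcc (b : Bool) : ℕ → List Bool → Option (List Bool)
  | _, [] => none
  | i, a :: w =>
    if a = b then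
      if i = 1 then some (b :: a :: w)
      else Option.map (List.cons a) (dblOcc b (i - 1) w)
    else Option.map (List.cons a) (dblOcc b i w)

namespace PawnAux

/-- prefix count of `true`s -/
def cnt (w : List Bool) (k : ℕ) : ℕ := (w.take k).count true

lemma cnt_zero (w : List Bool) : cnt w 0 = 0 := by simp [cnt]

lemma cnt_nil (k : ℕ) : cnt [] k = 0 := by simp [cnt]

lemma cnt_cons (a : Bool) (w : List Bool) (k : ℕ) :
    cnt (a :: w) (k+1) = cnt w k + (if a = true then 1 else 0) := by
  simp [cnt, List.count_cons]

lemma cnt_mono (w : List Bool) {k l : ℕ} (h : k ≤ l) : cnt w k ≤ cnt w l := by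
  have h1 : w.take k = (w.take l).take k := by
    rw [List.take_take, min_eq_left h]
  rw [cnt, h1]
  exact List.Sublist.count_le _ (List.take_sublist _ _)

lemma cnt_le_count (w : List Bool) (k : ℕ) : cnt w k ≤ w.count true :=
  List.Sublist.count_le _ (List.take_sublist _ _)

lemma cnt_of_length_le (w : List Bool) (k : ℕ) (h : w.length ≤ k) :
    cnt w k = w.count true := by
  simp [cnt, List.take_of_length_le h]

lemma cnt_succ_le (w : List Bool) (k : ℕ) : cnt w (k+1) ≤ cnt w k + 1 := by
  induction w generalizing k with
  | nil => simp [cnt_nil]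
  | cons a w ih =>
    cases k with
    | zero => rw [cnt_cons, cnt_zero, cnt_zero]; split <;> omega
    | succ k => rw [cnt_cons, cnt_cons]; have := ih k; omega

lemma cnt_le (w : List Bool) (k : ℕ) : cnt w k ≤ k :=
  le_trans List.count_le_length (List.length_take_le k w)

lemma cnt_append (u t : List Bool) (k : ℕ) :
    cnt (u ++ t) k = cnt u k + cnt t (k - u.length) := by
  simp [cnt, List.take_append, List.count_append]

lemma cnt_append_left (u t : List Bool) {k : ℕ} (h : k ≤ u.length) :
    cnt (u ++ t) k = cnt u k := by
  rw [cnt_append, Nat.sub_eq_zero_of_le h, cnt_zero]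
  omega

/-- key lemma: effect on prefix counts of inserting a `true` at position `|a|`. -/
lemma cnt_insert (a s : List Bool) (k : ℕ) :
    cnt (a ++ true :: s) k
      = if k ≤ a.length then cnt (a ++ s) k else cnt (a ++ s) (k-1) + 1 := by
  split
  · rename_i h
    rw [cnt_append_left _ _ h, cnt_append_left _ _ h]
  · rename_i h
    push_neg at h
    rw [cnt_append a (true :: s) k, cnt_append a s (k-1)]
    have h1 : k - a.length = (k - a.length - 1) + 1 := by omega
    have h3 : cnt a k = a.count true := cnt_of_length_le _ _ (by omega)
    have h4 : cnt a (k-1) = a.count true := cnt_of_length_le _ _ (by omega)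
    have h5 : cnt (true :: s) (k - a.length) = cnt s (k - a.length - 1) + 1 := by
      rw [h1, cnt_cons]; simp
    have h6 : k - 1 - a.length = k - a.length - 1 := by omega
    rw [h3, h4, h5, h6]
    omega

/-- measure -/
def nu : List Bool → ℕ
  | [] => 0
  | a :: w => (if a = true then w.length + 1 else 0) + nu w

lemma nu_eq_sum (w : List Bool) :
    nu w = ∑ k ∈ Finset.range (w.length + 1), cnt w k := by
  induction w with
  | nil => simp [nu, cnt_nil]
  | cons a w ih =>
    rw [List.length_cons, Finset.sum_range_succ']
    simp only [cnt_cons, cnt_zero]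
    rw [Finset.sum_add_distrib, Finset.sum_const, Finset.card_range]
    rw [nu, ih]
    cases a <;> simp <;> try ring

lemma nu_append (u t : List Bool) :
    nu (u ++ t) = nu u + u.count true * t.length + nu t := by
  induction u with
  | nil => simp [nu]
  | cons a u ih =>
    cases a <;> simp [nu, ih, List.count_cons, List.length_append] <;> try ring

/-- The reachability invariant/characterization. -/
def Cond (w₀ w₁ : List Bool) : Prop :=
  w₀.length = w₁.length ∧ w₀.count true = w₁.count true ∧ ∀ k, cnt w₁ k ≤ cnt w₀ k

lemma cnt_tf (v : List Bool) (j : ℕ) :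
    cnt ([true, false] ++ v) j = cnt ([false, true] ++ v) j + (if j = 1 then 1 else 0) := by
  match j with
  | 0 => simp [cnt_zero]
  | 1 => show cnt (true :: false :: v) 1 = cnt (false :: true :: v) 1 + 1
         rw [show (1:ℕ) = 0 + 1 from rfl, cnt_cons, cnt_cons, cnt_zero, cnt_zero]
         simp
  | (m+2) =>
    show cnt (true :: false :: v) (m+2) = cnt (false :: true :: v) (m+2) + _
    rw [cnt_cons, cnt_cons, cnt_cons, cnt_cons]
    simp

lemma cnt_move (u v : List Bool) (k : ℕ) :
    cnt (u ++ [true, false] ++ v) k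
      = cnt (u ++ [false, true] ++ v) k + (if k = u.length + 1 then 1 else 0) := by
  rw [List.append_assoc, List.append_assoc, cnt_append u ([true, false] ++ v) k,
    cnt_append u ([false, true] ++ v) k, cnt_tf]
  have h : (k - u.length = 1) ↔ (k = u.length + 1) := by omega
  rcases eq_or_ne k (u.length + 1) with hk | hk
  · rw [if_pos (h.mpr hk), if_pos hk]; ring
  · rw [if_neg (fun hh => hk (h.mp hh)), if_neg hk]; ring

lemma pawnMove_cond {w₀ w₁ : List Bool} (h : PawnMove w₀ w₁) : Cond w₀ w₁ := by
  obtain ⟨u, v, rfl, rfl⟩ := h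
  refine ⟨by simp, by simp [List.count_append], ?_⟩
  intro k
  have := cnt_move u v k
  split at this <;> omega

lemma reach_cond {w₀ w₁ : List Bool} (h : Reach w₀ w₁) : Cond w₀ w₁ := by
  induction h with
  | refl => exact ⟨rfl, rfl, fun k => le_refl _⟩
  | tail _ hstep ih =>
    obtain ⟨l1, c1, k1⟩ := ih
    obtain ⟨l2, c2, k2⟩ := pawnMove_cond hstep
    exact ⟨l1.trans l2, c1.trans c2, fun k => (k2 k).trans (k1 k)⟩

lemma pawnMove_cons {w w' : List Bool} (a : Bool) (h : PawnMove w w') :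
    PawnMove (a :: w) (a :: w') := by
  obtain ⟨u, v, rfl, rfl⟩ := h
  exact ⟨a :: u, v, rfl, rfl⟩

lemma reach_cons {w w' : List Bool} (a : Bool) (h : Reach w w') :
    Reach (a :: w) (a :: w') := by
  induction h with
  | refl => exact Relation.ReflTransGen.refl
  | tail _ hstep ih => exact ih.tail (pawnMove_cons a hstep)

lemma exists_false_split {w : List Bool} (h : false ∈ w) :
    ∃ m rest, w = List.replicate m true ++ false :: rest := by
  induction w with
  | nil => simp at h
  | cons a w ih =>
    cases a with
    | false => exact ⟨0, w, rfl⟩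
    | true =>
      have h' : false ∈ w := by simpa using h
      obtain ⟨m, rest, rfl⟩ := ih h'
      exact ⟨m+1, rest, by simp [List.replicate_succ]⟩

lemma cons_replicate_true (m : ℕ) (z : List Bool) :
    true :: (List.replicate m true ++ z) = List.replicate m true ++ true :: z := by
  induction m with
  | zero => rfl
  | succ m ih => simp [List.replicate_succ]; simpa using ih

lemma cnt_replicate_true (m k : ℕ) : cnt (List.replicate m true) k = min k m := by
  simp [cnt, List.take_replicate, List.count_replicate]

lemma cond_nu_le {w₀ w₁ : List Bool} (h : Cond w₀ w₁) : nu w₁ ≤ nu w₀ := by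
  rw [nu_eq_sum, nu_eq_sum, ← h.1]
  exact Finset.sum_le_sum (fun k _ => h.2.2 k)

lemma cond_reach_aux : ∀ N w₀ w₁, Cond w₀ w₁ → nu w₀ - nu w₁ ≤ N → Reach w₀ w₁ := by
  intro N
  induction N using Nat.strong_induction_on with
  | _ N ihN =>
  intro w₀
  induction w₀ with
  | nil =>
    intro w₁ hc _
    have : w₁ = [] := List.length_eq_zero_iff.mp (hc.1.symm)
    subst this
    exact Relation.ReflTransGen.refl
  | cons a w ihw =>
    intro w₁ hc hmu
    obtain ⟨len, cntEq, hk⟩ := hc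
    cases w₁ with
    | nil => simp at len
    | cons b w' =>
      by_cases hab : a = b
      · subst hab
        have hlen : w.length = w'.length := by simpa using len
        have hcnt : w.count true = w'.count true := by
          cases a <;> simp [List.count_cons] at cntEq <;> omega
        have hkk : ∀ k, cnt w' k ≤ cnt w k := by
          intro k
          have := hk (k+1)
          rw [cnt_cons, cnt_cons] at this
          omega
        have hnu : nu w - nu w' ≤ N := by
          rw [nu, nu, hlen] at hmu
          omega
        exact reach_cons a (ihw w' ⟨hlen, hcnt, hkk⟩ hnu)
      · cases a <;> cases b
        · exact absurd rfl hab
        · -- a = false, b = true : contradiction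
          exfalso
          have := hk 1
          rw [show (1:ℕ) = 0 + 1 from rfl, cnt_cons, cnt_cons, cnt_zero, cnt_zero] at this
          simp at this
        · -- a = true, b = false : make a move
          have hlen : w.length = w'.length := by simpa using len
          have hcnt : w.count true + 1 = w'.count true := by
            simpa [List.count_cons] using cntEq
          have hfw : false ∈ w := by
            by_contra hf
            have hall : w.count true = w.length :=
              List.count_eq_length.mpr (fun x hx => by
                cases x
                · exact absurd hx hf
                · rfl)
            have := List.count_le_length (a := true) (l := w')
            omega
          obtain ⟨m, rest, rfl⟩ := exists_false_split hfw
          have hshape : true :: (List.replicate m true ++ false :: rest)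
              = List.replicate m true ++ [true, false] ++ rest := by
            rw [cons_replicate_true]; simp
          rw [hshape] at hk hmu len cntEq ⊢
          have hmv : PawnMove (List.replicate m true ++ [true, false] ++ rest)
              (List.replicate m true ++ [false, true] ++ rest) :=
            ⟨List.replicate m true, rest, rfl, rfl⟩
          have hcnt2 := pawnMove_cond hmv
          have hCond : Cond (List.replicate m true ++ [false, true] ++ rest) (false :: w') := by
            refine ⟨hcnt2.1.symm.trans len, hcnt2.2.1.symm.trans cntEq, ?_⟩
            intro k
            have h1 := hk k
            have h2 := cnt_move (List.replicate m true) rest k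
            simp only [List.length_replicate] at h2
            rcases eq_or_ne k (m+1) with hkm | hkm
            · subst hkm
              -- cnt (false :: w') (m+1) = cnt w' m ≤ m ≤ cnt w₀' (m+1)
              have h3 : cnt (false :: w') (m+1) ≤ m := by
                rw [cnt_cons]
                simp
                exact cnt_le w' m
              have h4 : m ≤ cnt (List.replicate m true ++ [false, true] ++ rest) (m+1) := by
                rw [List.append_assoc, cnt_append (List.replicate m true) ([false, true] ++ rest),
                  List.length_replicate, cnt_replicate_true]
                omega
              omega
            · rw [if_neg hkm] at h2
              omega
          have hnu1 : nu (List.replicate m true ++ [true, false] ++ rest)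
              = nu (List.replicate m true ++ [false, true] ++ rest) + 1 := by
            rw [List.append_assoc, List.append_assoc,
              nu_append (List.replicate m true) ([true, false] ++ rest),
              nu_append (List.replicate m true) ([false, true] ++ rest)]
            simp only [List.cons_append, List.nil_append]
            simp [nu]
            ring
          have hle : nu (false :: w') ≤ nu (List.replicate m true ++ [false, true] ++ rest) :=
            cond_nu_le hCond
          have hN1 : 1 ≤ N := by omega
          have := ihN (N-1) (by omega) (List.replicate m true ++ [false, true] ++ rest)
            (false :: w') hCond (by omega)
          exact Relation.ReflTransGen.head hmv this
        · exact absurd rfl hab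

lemma reach_iff (w₀ w₁ : List Bool) : Reach w₀ w₁ ↔ Cond w₀ w₁ :=
  ⟨reach_cond, fun h => cond_reach_aux (nu w₀ - nu w₁) w₀ w₁ h le_rfl⟩

end PawnAux

namespace PawnAux

lemma cond_equiv (a b u v : List Bool) (h : u.count true = a.count true + 1) :
    Cond (a ++ true :: true :: b) (u ++ true :: v) ↔ Cond (a ++ true :: b) (u ++ v) := by
  have hx' : ∀ k, cnt (a ++ true :: true :: b) k
      = if k ≤ a.length then cnt (a ++ true :: b) k else cnt (a ++ true :: b) (k-1) + 1 :=
    fun k => cnt_insert a (true :: b) k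
  have hy : ∀ k, cnt (u ++ true :: v) k
      = if k ≤ u.length then cnt (u ++ v) k else cnt (u ++ v) (k-1) + 1 :=
    fun k => cnt_insert u v k
  set c := a.count true with hc
  have sA : ∀ k, k ≤ a.length → cnt (a ++ true :: b) k ≤ c := by
    intro k hk
    rw [cnt_append_left _ _ hk]
    exact cnt_le_count a k
  have sA1 : cnt (a ++ true :: b) (a.length + 1) = c + 1 := by
    rw [cnt_append, cnt_of_length_le a _ (by omega)]
    have : a.length + 1 - a.length = 0 + 1 := by omega
    rw [this, cnt_cons, cnt_zero]
    simp [hc]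
  have sU : ∀ k, k ≤ u.length → cnt (u ++ v) k ≤ c + 1 := by
    intro k hk
    rw [cnt_append_left _ _ hk, ← h]
    exact cnt_le_count u k
  have sU1 : cnt (u ++ v) u.length = c + 1 := by
    rw [cnt_append_left _ _ le_rfl, cnt_of_length_le u _ le_rfl, h]
  constructor
  · rintro ⟨l, cq, hk⟩
    refine ⟨by simp at l ⊢; omega, by simp [List.count_append, List.count_cons] at cq ⊢; omega, ?_⟩
    intro k
    rcases le_or_gt k u.length with hkU | hkU
    · rcases le_or_gt k a.length with hkA | hkA
      · have h1 := hk k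
        rw [hx' k, hy k, if_pos hkA, if_pos hkU] at h1
        exact h1
      · have h1 := sU k hkU
        have h2 : c + 1 ≤ cnt (a ++ true :: b) k := sA1 ▸ cnt_mono _ (by omega)
        omega
    · have h1 := hk (k+1)
      rw [hx' (k+1), hy (k+1), if_neg (by omega)] at h1
      simp only [Nat.add_sub_cancel] at h1
      have h2 := cnt_succ_le (a ++ true :: b) k
      split at h1 <;> omega
  · rintro ⟨l, cq, hk⟩
    refine ⟨by simp at l ⊢; omega, by simp [List.count_append, List.count_cons] at cq ⊢; omega, ?_⟩
    intro k
    rw [hx' k, hy k]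
    rcases le_or_gt k u.length with hkU | hkU
    · rw [if_pos hkU]
      have h1 := hk k
      split
      · exact h1
      · rename_i hkA
        have h2 : k = (k-1) + 1 := by omega
        have h3 := cnt_succ_le (a ++ true :: b) (k-1)
        rw [← h2] at h3
        omega
    · rw [if_neg (by omega)]
      rcases le_or_gt k a.length with hkA | hkA
      · -- impossible : u.length < k ≤ a.length
        exfalso
        have h1 := hk (k-1)
        have h2 : cnt (a ++ true :: b) (k-1) ≤ c := sA _ (by omega)
        have h3 : c + 1 ≤ cnt (u ++ v) (k-1) := sU1 ▸ cnt_mono _ (by omega)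
        omega
      · rw [if_neg (by omega)]
        have h1 := hk (k-1)
        omega

lemma dbl_some : ∀ (i : ℕ) (x : List Bool), 1 ≤ i → i ≤ x.count true →
    ∃ a b, x = a ++ true :: b ∧ a.count true = i - 1 ∧
      dblOcc true i x = some (a ++ true :: true :: b) := by
  intro i x
  induction x generalizing i with
  | nil => intro h1 h2; simp at h2; omega
  | cons c w ih =>
    intro h1 h2
    cases c with
    | true =>
      by_cases hi1 : i = 1
      · subst hi1
        exact ⟨[], w, rfl, rfl, by simp [dblOcc]⟩
      · have h2' : i - 1 ≤ w.count true := by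
          simp [List.count_cons] at h2; omega
        obtain ⟨a, b, hxe, hca, hdb⟩ := ih (i-1) (by omega) h2'
        refine ⟨true :: a, b, by simp [hxe], ?_, ?_⟩
        · simp [List.count_cons, hca]; omega
        · rw [dblOcc]
          simp [hi1, hdb]
    | false =>
      have h2' : i ≤ w.count true := by simpa using h2
      obtain ⟨a, b, hxe, hca, hdb⟩ := ih i h1 h2'
      refine ⟨false :: a, b, by simp [hxe], by simpa using hca, ?_⟩
      rw [dblOcc]
      simp [hdb]

lemma del_some : ∀ (i : ℕ) (y y' : List Bool), 1 ≤ i → delOcc true i y = some y' →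
    ∃ u v, y = u ++ true :: v ∧ u.count true = i - 1 ∧ y' = u ++ v := by
  intro i y
  induction y generalizing i with
  | nil => intro y' _ hdel; simp [delOcc] at hdel
  | cons c w ih =>
    intro y' h1 hdel
    cases c with
    | true =>
      by_cases hi1 : i = 1
      · subst hi1
        rw [delOcc] at hdel
        simp at hdel
        exact ⟨[], w, rfl, rfl, by simp [hdel]⟩
      · rw [delOcc] at hdel
        simp [hi1] at hdel
        obtain ⟨z, hz, rfl⟩ := hdel
        obtain ⟨u, v, rfl, hcu, rfl⟩ := ih (i-1) z (by omega) hz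
        refine ⟨true :: u, v, by simp, ?_, by simp⟩
        simp [List.count_cons, hcu]; omega
    | false =>
      rw [delOcc] at hdel
      simp at hdel
      obtain ⟨z, hz, rfl⟩ := hdel
      obtain ⟨u, v, rfl, hcu, rfl⟩ := ih i z h1 hz
      exact ⟨false :: u, v, by simp, by simpa using hcu, by simp⟩

lemma del_none : ∀ (i : ℕ) (y : List Bool), 1 ≤ i → delOcc true i y = none →
    y.count true < i := by
  intro i y
  induction y generalizing i with
  | nil => intro h1 _; simp; omega
  | cons c w ih =>
    intro h1 hdel
    cases c with
    | true =>
      by_cases hi1 : i = 1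
      · subst hi1; rw [delOcc] at hdel; simp at hdel
      · rw [delOcc] at hdel
        simp [hi1] at hdel
        have := ih (i-1) (by omega) hdel
        simp [List.count_cons]
        omega
    | false =>
      rw [delOcc] at hdel
      simp at hdel
      have := ih i h1 hdel
      simpa using this

end PawnAux

open PawnAux

/-- The `*`-adjoint of doubling the `i`-th pawn is deleting the `(i+1)`-th
pawn: `⟨a_{p,i}* x | y⟩ = ⟨x | a_{p,i+1} y⟩`. -/
theorem dbl_del_pawn_adjoint (i : ℕ) (hi : 1 ≤ i) (x : List Bool)
    (hx : i ≤ x.count true) (y : List Bool) :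
    pairingO (dblOcc true i x) (some y) = pairingO (some x) (delOcc true (i + 1) y) := by
  obtain ⟨a, b, rfl, hca, hdbl⟩ := dbl_some i x hi hx
  rw [hdbl]
  cases hdel : delOcc true (i+1) y with
  | none =>
    have hcy : y.count true < i + 1 := del_none (i+1) y (by omega) hdel
    have hnr : ¬ Reach (a ++ true :: true :: b) y := by
      intro hr
      have hc := (reach_cond hr).2.1
      simp [List.count_append, List.count_cons] at hc
      simp [List.count_append, List.count_cons] at hx
      omega
    simp [pairingO, pairing, hnr]
  | some y' =>
    obtain ⟨u, v, rfl, hcu, rfl⟩ := del_some (i+1) y y' (by omega) hdel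
    have key : Reach (a ++ true :: true :: b) (u ++ true :: v) ↔ Reach (a ++ true :: b) (u ++ v) := by
      rw [reach_iff, reach_iff]
      exact cond_equiv a b u v (by omega)
    show pairing _ _ = pairing _ _
    simp only [pairing]
    by_cases hR : Reach (a ++ true :: true :: b) (u ++ true :: v)
    · rw [if_pos hR, if_pos (key.mp hR)]
    · rw [if_neg hR, if_neg (fun hh => hR (key.mpr hh))]
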